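/- Let G be a connected finite undirected multigraph with s, t ∈ V(G), s ≠ t, let λ = λ_G(s,t), and let W_0, …, W_{q+1} be the bundles of G with the inter-bundle cuts C'_0, …, C'_q. Then each bundle W_i induces a subgraph G[W_i] with at most λ connected components; for 1 ≤ i ≤ q, each connected component of G[W_i] is incident with some number c ≥ 1 of edges of C'_{i−1} and with exactly c edges of C'_i; moreover W_0 is incident with all λ edges of C'_0 and W_{q+1} is incident with all λ edges of C'_q. -/

import Mathlib

/-!
A finite undirected multigraph (parallel edges allowed, no loops) is modelled by a
vertex type `V`, an edge type `E` (both finite) and an endpoint map `ends : E → Sym2 V`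
such that no edge is a loop (`¬ (ends e).IsDiag`).
-/

namespace FlowAug

variable {V E : Type}

/-- Two vertices are adjacent in `G - X` if some edge outside `X` joins them. -/
def Adj (ends : E → Sym2 V) (X : Set E) (u v : V) : Prop :=
  ∃ e, e ∉ X ∧ ends e = s(u, v)

/-- Reachability in `G - X`. -/
def Reach (ends : E → Sym2 V) (X : Set E) : V → V → Prop :=
  Relation.ReflTransGen (Adj ends X)

/-- `R_S(X)` : the set of vertices reachable from the vertex set `S` in `G - X`. -/
def RS (ends : E → Sym2 V) (X : Set E) (S : Set V) : Set V :=
  {v | ∃ u ∈ S, Reach ends X u v}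

/-- `δ(S)` : the set of edges with exactly one endpoint in `S`. -/
def edgeBoundary (ends : E → Sym2 V) (S : Set V) : Set E :=
  {e | ∃ u v, ends e = s(u, v) ∧ u ∈ S ∧ v ∉ S}

/-- `X` is an `(S,T)`-cut. -/
def IsCut (ends : E → Sym2 V) (X : Set E) (S T : Set V) : Prop :=
  RS ends X S ∩ RS ends X T = ∅

/-- `X` is a minimal `(S,T)`-cut: no proper subset of `X` is an `(S,T)`-cut. -/
def IsMinimalCut (ends : E → Sym2 V) (X : Set E) (S T : Set V) : Prop :=
  IsCut ends X S T ∧ ∀ Y : Set E, Y ⊂ X → ¬ IsCut ends Y S T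

/-- `X` is an `(S,T)`-cut of minimum cardinality. -/
def IsMinimumCut (ends : E → Sym2 V) (X : Set E) (S T : Set V) : Prop :=
  IsCut ends X S T ∧ ∀ Y : Set E, IsCut ends Y S T → X.ncard ≤ Y.ncard

/-- `X` is an `(S,T)`-cut that is closest to `S`: every `(S,T)`-cut `X' ≠ X` with
`R_S(X') ⊆ R_S(X)` satisfies `|X'| > |X|`. -/
def IsClosestCut (ends : E → Sym2 V) (X : Set E) (S T : Set V) : Prop :=
  IsCut ends X S T ∧
    ∀ X' : Set E, IsCut ends X' S T → X' ≠ X →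
      RS ends X' S ⊆ RS ends X S → X.ncard < X'.ncard

/-- `λ_G(s,t)` : the minimum cardinality of an `(s,t)`-cut (equivalently, by Menger's
theorem, the maximum number of pairwise edge-disjoint `(s,t)`-paths). -/
noncomputable def lamCut (ends : E → Sym2 V) (s t : V) : ℕ :=
  sInf {n | ∃ X : Set E, IsCut ends X {s} {t} ∧ X.ncard = n}

/-- `Z_{s,t}` : the edges of `Z` with one endpoint in `R_s(Z)` and one in `R_t(Z)`. -/
def Zst (ends : E → Sym2 V) (s t : V) (Z : Set E) : Set E :=
  {e | e ∈ Z ∧ ∃ u v, ends e = s(u, v) ∧ u ∈ RS ends Z {s} ∧ v ∈ RS ends Z {t}}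

/-- `Z` is a special `(s,t)`-cut: `Z` is an `(s,t)`-cut and `Z_{s,t}` is an `(s,t)`-cut. -/
def IsSpecial (ends : E → Sym2 V) (s t : V) (Z : Set E) : Prop :=
  IsCut ends Z {s} {t} ∧ IsCut ends (Zst ends s t Z) {s} {t}

/-- `Z` is eligible for `(s,t)`: special, and every edge of `Z` has its endpoints in
different connected components of `G - Z`. -/
def IsEligible (ends : E → Sym2 V) (s t : V) (Z : Set E) : Prop :=
  IsSpecial ends s t Z ∧ ∀ e ∈ Z, ∀ u v : V, ends e = s(u, v) → ¬ Reach ends Z u v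

/-- `Z` is a star `(s,t)`-cut: an `(s,t)`-cut each of whose edges has exactly one
endpoint in `R_s(Z)`. -/
def IsStarCut (ends : E → Sym2 V) (s t : V) (Z : Set E) : Prop :=
  IsCut ends Z {s} {t} ∧
    ∀ e ∈ Z, ∃ u v : V, ends e = s(u, v) ∧ u ∈ RS ends Z {s} ∧ v ∉ RS ends Z {s}

/-- A path from `s` to `t` in the multigraph described by `ends`, given by its
sequence of vertices and traversed edges. -/
structure MGPath (V E : Type) (ends : E → Sym2 V) (s t : V) where
  n : ℕ
  vert : Fin (n + 1) → V
  edge : Fin n → E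
  vert_zero : vert 0 = s
  vert_last : vert (Fin.last n) = t
  ends_eq : ∀ i : Fin n, ends (edge i) = s(vert i.castSucc, vert i.succ)

/-- A family of paths is (pairwise) edge-disjoint: no edge is used twice, neither on
a single path nor on two different paths. -/
def EdgeDisjoint {ends : E → Sym2 V} {s t : V} {k : ℕ}
    (P : Fin k → MGPath V E ends s t) : Prop :=
  Function.Injective fun p : (Σ i : Fin k, Fin (P i).n) => (P p.1).edge p.2

/-- `P` is a witnessing `(s,t)`-flow for `Z`: a family of `λ_G(s,t)` pairwise
edge-disjoint `(s,t)`-paths such that every edge of `Z_{s,t}` occurs on a path of `P`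
and every path of `P` contains exactly one edge of `Z`. -/
def IsWitnessingFlow (ends : E → Sym2 V) (s t : V) (Z : Set E) {k : ℕ}
    (P : Fin k → MGPath V E ends s t) : Prop :=
  k = lamCut ends s t ∧ EdgeDisjoint P ∧
    (∀ e ∈ Zst ends s t Z, ∃ (i : Fin k) (j : Fin (P i).n), (P i).edge j = e) ∧
    ∀ i : Fin k, ∃! j : Fin (P i).n, (P i).edge j ∈ Z

/-- The vertices occurring on the paths of a family `P`. -/
def pathVerts {ends : E → Sym2 V} {s t : V} {k : ℕ}
    (P : Fin k → MGPath V E ends s t) : Set V :=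
  {v | ∃ (i : Fin k) (m : Fin ((P i).n + 1)), (P i).vert m = v}

/-- The edges occurring on the paths of a family `P`. -/
def pathEdges {ends : E → Sym2 V} {s t : V} {k : ℕ}
    (P : Fin k → MGPath V E ends s t) : Set E :=
  {e | ∃ (i : Fin k) (j : Fin (P i).n), (P i).edge j = e}

/-- The arcs obtained by orienting every edge of every path of `P` in the forward
direction (from `s` towards `t`). -/
def DirAdjOnFlow {ends : E → Sym2 V} {s t : V} {k : ℕ}
    (P : Fin k → MGPath V E ends s t) (u v : V) : Prop :=
  ∃ (i : Fin k) (l : Fin (P i).n), (P i).vert l.castSucc = u ∧ (P i).vert l.succ = v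

/-- `N[S]` : the closed neighborhood of `S`. -/
def closedNbhd (ends : E → Sym2 V) (S : Set V) : Set V :=
  S ∪ {v | ∃ u ∈ S, ∃ e : E, ends e = s(u, v)}

/-- `X` is the minimum `(s,t)`-cut closest to `s` among all minimum `(s,t)`-cuts
satisfying the property `P`. -/
def IsClosestMinCutAmong (ends : E → Sym2 V) (s t : V) (P : Set E → Prop)
    (X : Set E) : Prop :=
  IsMinimumCut ends X {s} {t} ∧ P X ∧
    ∀ Y : Set E, IsMinimumCut ends Y {s} {t} → P Y → Y ≠ X →
      RS ends Y {s} ⊆ RS ends X {s} → X.ncard < Y.ncard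

/-- `C 0, …, C p` is the canonical sequence of non-crossing minimum `(s,t)`-cuts:
`C 0` is the unique minimum `(s,t)`-cut closest to `s`; `C i` is the unique minimum
`(s,t)`-cut closest to `s` among all minimum `(s,t)`-cuts `X` with
`N[R_s(C (i-1))] ⊆ R_s(X)`; and `p` is the largest index for which such a cut exists. -/
def CanonSeq (ends : E → Sym2 V) (s t : V) (p : ℕ) (C : ℕ → Set E) : Prop :=
  IsClosestMinCutAmong ends s t (fun _ => True) (C 0) ∧
    (∀ i : ℕ, 0 < i → i ≤ p →
      IsClosestMinCutAmong ends s t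
        (fun X => closedNbhd ends (RS ends (C (i - 1)) {s}) ⊆ RS ends X {s}) (C i)) ∧
    ¬ ∃ X : Set E, IsMinimumCut ends X {s} {t} ∧
        closedNbhd ends (RS ends (C p) {s}) ⊆ RS ends X {s}

/-- The blocks `V_0, …, V_{p+1}` associated with the canonical sequence of cuts. -/
def blockOf (ends : E → Sym2 V) (s : V) (p : ℕ) (C : ℕ → Set E) (i : ℕ) : Set V :=
  if i = 0 then RS ends (C 0) {s}
  else if i ≤ p then RS ends (C i) {s} \ RS ends (C (i - 1)) {s}
  else Set.univ \ RS ends (C p) {s}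

/-- Adjacency inside the induced subgraph `G[B]`. -/
def AdjIn (ends : E → Sym2 V) (B : Set V) (u v : V) : Prop :=
  u ∈ B ∧ v ∈ B ∧ ∃ e : E, ends e = s(u, v)

/-- Reachability inside the induced subgraph `G[B]`. -/
def ReachIn (ends : E → Sym2 V) (B : Set V) : V → V → Prop :=
  Relation.ReflTransGen (AdjIn ends B)

/-- The induced subgraph `G[B]` is connected. -/
def ConnIn (ends : E → Sym2 V) (B : Set V) : Prop :=
  ∀ u ∈ B, ∀ v ∈ B, ReachIn ends B u v

/-- The connected component of `u` in the induced subgraph `G[B]`. -/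
def compIn (ends : E → Sym2 V) (B : Set V) (u : V) : Set V :=
  {v | v ∈ B ∧ ReachIn ends B u v}

/-- The set of connected components of the induced subgraph `G[B]`. -/
def componentsIn (ends : E → Sym2 V) (B : Set V) : Set (Set V) :=
  {K | ∃ u ∈ B, K = compIn ends B u}

/-- The union of the blocks `V_a, …, V_b`. -/
def unionBlocks (ends : E → Sym2 V) (s : V) (p : ℕ) (C : ℕ → Set E)
    (a b : ℕ) : Set V :=
  ⋃ j ∈ Set.Icc a b, blockOf ends s p C j

/-- `st` encodes the decomposition of the blocks `V_0, …, V_{p+1}` into bundles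
`W_0, …, W_{q+1}`: bundle `W_i` consists of the blocks `V_{st i}, …, V_{st (i+1) - 1}`.
`W_0 = V_0`, and each further bundle is greedily either a single connected block, or a
maximal union of contiguous blocks inducing a disconnected subgraph. -/
def IsBundleSeq (ends : E → Sym2 V) (s : V) (p : ℕ) (C : ℕ → Set E)
    (q : ℕ) (st : ℕ → ℕ) : Prop :=
  st 0 = 0 ∧ st 1 = 1 ∧ st (q + 2) = p + 2 ∧
    (∀ i j : ℕ, i < j → j ≤ q + 2 → st i < st j) ∧
    ∀ i : ℕ, 1 ≤ i → i ≤ q + 1 →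
      (st (i + 1) = st i + 1 ∧ ConnIn ends (blockOf ends s p C (st i))) ∨
      (¬ ConnIn ends (blockOf ends s p C (st i)) ∧
        ¬ ConnIn ends (unionBlocks ends s p C (st i) (st (i + 1) - 1)) ∧
        ∀ j : ℕ, st (i + 1) - 1 < j → j ≤ p + 1 →
          ConnIn ends (unionBlocks ends s p C (st i) j))

/-- The bundle `W_i`. -/
def bundleOf (ends : E → Sym2 V) (s : V) (p : ℕ) (C : ℕ → Set E) (st : ℕ → ℕ)
    (i : ℕ) : Set V :=
  unionBlocks ends s p C (st i) (st (i + 1) - 1)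

/-- `C'_i` : the cut (among `C_0, …, C_p`) separating bundle `W_i` from `W_{i+1}`. -/
def interCut (C : ℕ → Set E) (st : ℕ → ℕ) (i : ℕ) : Set E :=
  C (st (i + 1) - 1)

/-- A bundle `W` is unaffected by `Z` if `N[W]` is contained in a single connected
component of `G - Z`. -/
def Unaffected (ends : E → Sym2 V) (Z : Set E) (W : Set V) : Prop :=
  ∀ u ∈ closedNbhd ends W, ∀ v ∈ closedNbhd ends W, Reach ends Z u v

/-- The stretch `W_{a,b} = W_a ∪ ⋯ ∪ W_b` of bundles. -/
def stretchSet (ends : E → Sym2 V) (s : V) (p : ℕ) (C : ℕ → Set E) (st : ℕ → ℕ)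
    (a b : ℕ) : Set V :=
  ⋃ i ∈ Set.Icc a b, bundleOf ends s p C st i

/-- The left interface of a stretch starting at bundle `W_a`. -/
def leftInterface (ends : E → Sym2 V) (s : V) (p : ℕ) (C : ℕ → Set E) (st : ℕ → ℕ)
    (a : ℕ) : Set V :=
  if a = 0 then {s}
  else {v | v ∈ bundleOf ends s p C st a ∧ ∃ e ∈ interCut C st (a - 1), v ∈ ends e}

/-- The right interface of a stretch ending at bundle `W_b`. -/
def rightInterface (ends : E → Sym2 V) (s t : V) (p : ℕ) (C : ℕ → Set E)
    (st : ℕ → ℕ) (q b : ℕ) : Set V :=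
  if b = q + 1 then {t}
  else {v | v ∈ bundleOf ends s p C st b ∧ ∃ e ∈ interCut C st b, v ∈ ends e}

/-- `W_{a,b}` is a maximal stretch of bundles all affected by `Z`. -/
def MaxAffStretch (ends : E → Sym2 V) (s : V) (p : ℕ) (C : ℕ → Set E)
    (st : ℕ → ℕ) (q : ℕ) (Z : Set E) (a b : ℕ) : Prop :=
  a ≤ b ∧ b ≤ q + 1 ∧
    (∀ i : ℕ, a ≤ i → i ≤ b → ¬ Unaffected ends Z (bundleOf ends s p C st i)) ∧
    (a = 0 ∨ Unaffected ends Z (bundleOf ends s p C st (a - 1))) ∧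
    (b = q + 1 ∨ Unaffected ends Z (bundleOf ends s p C st (b + 1)))

/-- `W_{a,b}` is a maximal stretch of bundles affected by `Z` containing both a vertex
reachable from `s` and a vertex reachable from `t` in `G - Z`. -/
def StronglyAffStretch (ends : E → Sym2 V) (s t : V) (p : ℕ) (C : ℕ → Set E)
    (st : ℕ → ℕ) (q : ℕ) (Z : Set E) (a b : ℕ) : Prop :=
  MaxAffStretch ends s p C st q Z a b ∧
    (stretchSet ends s p C st a b ∩ RS ends Z {s}).Nonempty ∧
    (stretchSet ends s p C st a b ∩ RS ends Z {t}).Nonempty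

/-- Adjacency inside the induced subgraph `G[B]` avoiding the edge set `X`. -/
def AdjInX (ends : E → Sym2 V) (B : Set V) (X : Set E) (u v : V) : Prop :=
  u ∈ B ∧ v ∈ B ∧ ∃ e, e ∉ X ∧ ends e = s(u, v)

/-- Reachability inside `G[B] - X`. -/
def ReachInX (ends : E → Sym2 V) (B : Set V) (X : Set E) : V → V → Prop :=
  Relation.ReflTransGen (AdjInX ends B X)

/-- `X` is a star `(a,b)`-cut of the induced subgraph `H = G[B]`: in `H - X` no path
connects `a` and `b`, and every edge of `X` has exactly one endpoint reachable from
`a` in `H - X`. -/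
def IsStarCutIn (ends : E → Sym2 V) (B : Set V) (a b : V) (X : Set E) : Prop :=
  ¬ ReachInX ends B X a b ∧
    ∀ e ∈ X, ∃ u v : V, ends e = s(u, v) ∧
      ReachInX ends B X a u ∧ ¬ ReachInX ends B X a v

end FlowAug

namespace FlowAug

section Aux

variable {V E : Type}

lemma sym2_decomp (z : Sym2 V) : ∃ u v : V, z = s(u, v) := by
  induction z using Sym2.ind with
  | _ u v => exact ⟨u, v, rfl⟩

lemma adj_symm {ends : E → Sym2 V} {X : Set E} {u v : V} (h : Adj ends X u v) :
    Adj ends X v u := by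
  obtain ⟨e, he, hev⟩ := h
  exact ⟨e, he, by rw [hev, Sym2.eq_swap]⟩

lemma reach_symm {ends : E → Sym2 V} {X : Set E} {u v : V} (h : Reach ends X u v) :
    Reach ends X v u :=
  (@Relation.ReflTransGen.symmetric _ _ ⟨fun _ _ h => adj_symm h⟩).symm _ _ h

lemma mem_RS_iff {ends : E → Sym2 V} {X : Set E} {s v : V} :
    v ∈ RS ends X {s} ↔ Reach ends X s v := by
  constructor
  · rintro ⟨u, hu, h⟩
    rw [Set.mem_singleton_iff] at hu
    subst hu; exact h
  · exact fun h => ⟨s, rfl, h⟩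

lemma self_mem_RS {ends : E → Sym2 V} {X : Set E} {s : V} : s ∈ RS ends X {s} :=
  mem_RS_iff.mpr Relation.ReflTransGen.refl

lemma RS_step {ends : E → Sym2 V} {X : Set E} {s u v : V} {e : E}
    (hu : u ∈ RS ends X {s}) (he : e ∉ X) (hev : ends e = s(u, v)) :
    v ∈ RS ends X {s} :=
  mem_RS_iff.mpr ((mem_RS_iff.mp hu).tail ⟨e, he, hev⟩)

lemma RS_mono {ends : E → Sym2 V} {X Y : Set E} (h : Y ⊆ X) (S : Set V) :
    RS ends X S ⊆ RS ends Y S := by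
  rintro v ⟨u, hu, hr⟩
  exact ⟨u, hu, Relation.ReflTransGen.mono (r := Adj ends X) (p := Adj ends Y)
    (fun a b hab => by
      obtain ⟨e, he, hev⟩ := hab
      exact ⟨e, fun hx => he (h hx), hev⟩) u v hr⟩

lemma RS_closed {ends : E → Sym2 V} {X : Set E} {s : V} {T : Set V} (hs : s ∈ T)
    (hcl : ∀ a b : V, ∀ f : E, a ∈ T → f ∉ X → ends f = s(a, b) → b ∈ T) :
    RS ends X {s} ⊆ T := by
  intro v hv
  have h := mem_RS_iff.mp hv
  clear hv
  induction h with
  | refl => exact hs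
  | tail _ h2 ih =>
    obtain ⟨f, hf, hfe⟩ := h2
    exact hcl _ _ f ih hf hfe

lemma isCut_elim {ends : E → Sym2 V} {X : Set E} {S T : Set V} (h : IsCut ends X S T)
    {v : V} (h1 : v ∈ RS ends X S) (h2 : v ∈ RS ends X T) : False := by
  have h' : RS ends X S ∩ RS ends X T = ∅ := h
  exact Set.eq_empty_iff_forall_notMem.mp h' v ⟨h1, h2⟩

lemma t_not_RS {ends : E → Sym2 V} {X : Set E} {s t : V} (h : IsCut ends X {s} {t}) :
    t ∉ RS ends X {s} := fun ht => isCut_elim h ht self_mem_RS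

lemma isCut_of_boundary {ends : E → Sym2 V} {X : Set E} {s t : V} {S : Set V}
    (hs : s ∈ S) (ht : t ∉ S)
    (hX : ∀ (e : E) (u v : V), ends e = s(u, v) → u ∈ S → v ∉ S → e ∈ X) :
    IsCut ends X {s} {t} := by
  have h1 : RS ends X {s} ⊆ S := RS_closed hs (by
    intro a b f ha hf hfe
    by_contra hb
    exact hf (hX f a b hfe ha hb))
  have h2 : RS ends X {t} ⊆ Sᶜ := RS_closed ht (by
    intro a b f ha hf hfe
    intro hb
    exact hf (hX f b a (hfe.trans Sym2.eq_swap) hb ha))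
  show RS ends X {s} ∩ RS ends X {t} = ∅
  apply Set.eq_empty_iff_forall_notMem.mpr
  rintro v ⟨hv1, hv2⟩
  exact h2 hv2 (h1 hv1)

lemma RS_drop_eq {ends : E → Sym2 V} {X : Set E} {s : V} {e : E} {u v : V}
    (hev : ends e = s(u, v))
    (hiff : (u ∈ RS ends X {s}) ↔ (v ∈ RS ends X {s})) :
    RS ends (X \ {e}) {s} = RS ends X {s} := by
  refine Set.Subset.antisymm ?_ (RS_mono Set.diff_subset _)
  refine RS_closed self_mem_RS ?_
  intro a b f ha hf hfe
  by_cases hfX : f ∈ X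
  · have hfe' : f = e := by
      by_contra hne
      exact hf ⟨hfX, by simp [hne]⟩
    subst hfe'
    rw [hev] at hfe
    rcases Sym2.eq_iff.mp hfe with ⟨h1, h2⟩ | ⟨h1, h2⟩
    · subst h1; subst h2; exact hiff.mp ha
    · subst h1; subst h2; exact hiff.mpr ha
  · exact RS_step ha hfX hfe

lemma cut_drop {ends : E → Sym2 V} {X : Set E} {s t : V} {e : E} {u v : V}
    (hcut : IsCut ends X {s} {t}) (hev : ends e = s(u, v))
    (hiff : (u ∈ RS ends X {s}) ↔ (v ∈ RS ends X {s})) :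
    IsCut ends (X \ {e}) {s} {t} := by
  have hR := RS_drop_eq hev hiff
  show RS ends (X \ {e}) {s} ∩ RS ends (X \ {e}) {t} = ∅
  apply Set.eq_empty_iff_forall_notMem.mpr
  rintro w ⟨hws, hwt⟩
  have h1 : Reach ends (X \ {e}) s w := mem_RS_iff.mp hws
  have h2 : Reach ends (X \ {e}) t w := mem_RS_iff.mp hwt
  have h3 : t ∈ RS ends (X \ {e}) {s} := mem_RS_iff.mpr (h1.trans (reach_symm h2))
  rw [hR] at h3
  exact isCut_elim hcut h3 self_mem_RS

lemma min_cut_star [Fintype E] {ends : E → Sym2 V} {X : Set E} {s t : V}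
    (hmin : IsMinimumCut ends X {s} {t}) {e : E} (he : e ∈ X) {u v : V}
    (hev : ends e = s(u, v)) : (u ∈ RS ends X {s}) ↔ (v ∉ RS ends X {s}) := by
  by_contra h
  have hiff : (u ∈ RS ends X {s}) ↔ (v ∈ RS ends X {s}) := by tauto
  have hcut := cut_drop hmin.1 hev hiff
  have hle := hmin.2 _ hcut
  have hss : X \ {e} ⊂ X := by
    constructor
    · exact Set.diff_subset
    · intro hsub
      exact (hsub he).2 rfl
  have hlt : (X \ {e}).ncard < X.ncard := Set.ncard_lt_ncard hss (Set.toFinite X)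
  omega

lemma star_decomp [Fintype E] {ends : E → Sym2 V} {X : Set E} {s t : V}
    (hmin : IsMinimumCut ends X {s} {t}) {e : E} (he : e ∈ X) :
    ∃ u v : V, ends e = s(u, v) ∧ u ∈ RS ends X {s} ∧ v ∉ RS ends X {s} := by
  obtain ⟨u, v, hev⟩ := sym2_decomp (ends e)
  have hiff := min_cut_star hmin he hev
  by_cases hu : u ∈ RS ends X {s}
  · exact ⟨u, v, hev, hu, hiff.mp hu⟩
  · have hv : v ∈ RS ends X {s} := by tauto
    exact ⟨v, u, hev.trans Sym2.eq_swap, hv, hu⟩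

lemma lam_le_cut {ends : E → Sym2 V} {X : Set E} {s t : V}
    (hcut : IsCut ends X {s} {t}) : lamCut ends s t ≤ X.ncard :=
  Nat.sInf_le ⟨X, hcut, rfl⟩

lemma lam_eq {ends : E → Sym2 V} {X : Set E} {s t : V}
    (hmin : IsMinimumCut ends X {s} {t}) : X.ncard = lamCut ends s t := by
  refine le_antisymm ?_ (lam_le_cut hmin.1)
  have hne : {n | ∃ Y : Set E, IsCut ends Y {s} {t} ∧ Y.ncard = n}.Nonempty :=
    ⟨X.ncard, X, hmin.1, rfl⟩
  obtain ⟨Y, hY, hYn⟩ := Nat.sInf_mem hne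
  calc X.ncard ≤ Y.ncard := hmin.2 Y hY
    _ = _ := hYn

lemma lam_pos [Fintype E] {ends : E → Sym2 V} {s t : V}
    (hconn : ∀ u v : V, Reach ends (∅ : Set E) u v) (hst : s ≠ t) :
    1 ≤ lamCut ends s t := by
  have huniv : IsCut ends (Set.univ : Set E) {s} {t} := by
    have h1 : ∀ x : V, RS ends (Set.univ : Set E) {x} ⊆ {x} := by
      intro x
      refine RS_closed rfl ?_
      intro a b f _ hf _
      exact absurd (Set.mem_univ f) hf
    show RS ends Set.univ {s} ∩ RS ends Set.univ {t} = ∅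
    apply Set.eq_empty_iff_forall_notMem.mpr
    rintro v ⟨hv1, hv2⟩
    have e1 : v = s := h1 s hv1
    have e2 : v = t := h1 t hv2
    exact hst (e1.symm.trans e2)
  by_contra h
  have h0 : lamCut ends s t = 0 := by omega
  have hne : {n | ∃ Y : Set E, IsCut ends Y {s} {t} ∧ Y.ncard = n}.Nonempty :=
    ⟨_, Set.univ, huniv, rfl⟩
  obtain ⟨Y, hY, hYn⟩ := Nat.sInf_mem hne
  have hY0 : Y.ncard = 0 := hYn.trans h0
  have hYe : Y = ∅ := by rwa [Set.ncard_eq_zero (Set.toFinite Y)] at hY0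
  subst hYe
  exact isCut_elim hY (mem_RS_iff.mpr (hconn s t)) self_mem_RS

lemma Cmin {ends : E → Sym2 V} {s t : V} {p : ℕ} {C : ℕ → Set E}
    (hC : CanonSeq ends s t p C) {j : ℕ} (hj : j ≤ p) :
    IsMinimumCut ends (C j) {s} {t} := by
  rcases Nat.eq_zero_or_pos j with h | h
  · subst h; exact hC.1.1
  · exact (hC.2.1 j h hj).1

lemma Cnest {ends : E → Sym2 V} {s t : V} {p : ℕ} {C : ℕ → Set E}
    (hC : CanonSeq ends s t p C) {j : ℕ} (h1 : 1 ≤ j) (hj : j ≤ p) :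
    RS ends (C (j - 1)) {s} ⊆ RS ends (C j) {s} :=
  Set.subset_union_left.trans (hC.2.1 j h1 hj).2.1

lemma Cnest' {ends : E → Sym2 V} {s t : V} {p : ℕ} {C : ℕ → Set E}
    (hC : CanonSeq ends s t p C) {j j' : ℕ} (hjj : j ≤ j') (hj' : j' ≤ p) :
    RS ends (C j) {s} ⊆ RS ends (C j') {s} := by
  revert hj'
  induction j', hjj using Nat.le_induction with
  | base => intro _; exact subset_rfl
  | succ n hn ih =>
    intro hn1
    exact (ih (by omega)).trans (Cnest hC (by omega) hn1)

lemma Cedge {ends : E → Sym2 V} {s t : V} {p : ℕ} {C : ℕ → Set E}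
    (hC : CanonSeq ends s t p C) {j : ℕ} (hj1 : j + 1 ≤ p) {e : E} {u v : V}
    (hev : ends e = s(u, v)) (hu : u ∈ RS ends (C j) {s}) :
    v ∈ RS ends (C (j + 1)) {s} := by
  have h := (hC.2.1 (j + 1) (by omega) hj1).2.1
  exact h (Or.inr ⟨u, hu, e, hev⟩)

lemma C_disj [Fintype E] {ends : E → Sym2 V} {s t : V} {p : ℕ} {C : ℕ → Set E}
    (hC : CanonSeq ends s t p C) {m m' : ℕ} (hmm : m < m') (hm' : m' ≤ p) {e : E}
    (he : e ∈ C m) : e ∉ C m' := by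
  intro he'
  obtain ⟨u, v, hev, hu, _⟩ := star_decomp (Cmin hC (by omega)) he
  have hv1 : v ∈ RS ends (C (m + 1)) {s} := Cedge hC (by omega) hev hu
  have hv2 : v ∈ RS ends (C m') {s} := Cnest' hC (by omega) hm' hv1
  have hu2 : u ∈ RS ends (C m') {s} := Cnest' hC (by omega) hm' hu
  obtain ⟨x, y, hexy, hx, hy⟩ := star_decomp (Cmin hC hm') he'
  rw [hev] at hexy
  rcases Sym2.eq_iff.mp hexy with ⟨h1, h2⟩ | ⟨h1, h2⟩
  · exact hy (h2 ▸ hv2)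
  · exact hy (h1 ▸ hu2)

lemma adjIn_symm {ends : E → Sym2 V} {B : Set V} {u v : V} (h : AdjIn ends B u v) :
    AdjIn ends B v u := by
  obtain ⟨h1, h2, e, hev⟩ := h
  exact ⟨h2, h1, e, hev.trans Sym2.eq_swap⟩

lemma reachIn_symm {ends : E → Sym2 V} {B : Set V} {u v : V} (h : ReachIn ends B u v) :
    ReachIn ends B v u :=
  (@Relation.ReflTransGen.symmetric _ _ ⟨fun _ _ h => adjIn_symm h⟩).symm _ _ h

lemma compIn_subset {ends : E → Sym2 V} {B : Set V} {u : V} : compIn ends B u ⊆ B :=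
  fun _ hv => hv.1

lemma comps_subset {ends : E → Sym2 V} {B : Set V} {K : Set V}
    (hK : K ∈ componentsIn ends B) : K ⊆ B := by
  obtain ⟨u, _, rfl⟩ := hK; exact compIn_subset

lemma comps_eq_of_mem {ends : E → Sym2 V} {B : Set V} {K K' : Set V}
    (hK : K ∈ componentsIn ends B) (hK' : K' ∈ componentsIn ends B)
    {v : V} (hv : v ∈ K) (hv' : v ∈ K') : K = K' := by
  obtain ⟨u, hu, rfl⟩ := hK
  obtain ⟨u', hu', rfl⟩ := hK'
  ext x
  constructor
  · rintro ⟨hxB, hx⟩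
    exact ⟨hxB, (hv'.2.trans (reachIn_symm hv.2)).trans hx⟩
  · rintro ⟨hxB, hx⟩
    exact ⟨hxB, (hv.2.trans (reachIn_symm hv'.2)).trans hx⟩

lemma reachIn_RS {ends : E → Sym2 V} {X : Set E} {s v : V} (hv : Reach ends X s v) :
    ReachIn ends (RS ends X {s}) s v := by
  induction hv with
  | refl => exact Relation.ReflTransGen.refl
  | @tail b c h1 h2 ih =>
    obtain ⟨e, he, hev⟩ := h2
    exact ih.tail ⟨mem_RS_iff.mpr h1, RS_step (mem_RS_iff.mpr h1) he hev, e, hev⟩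

lemma comps_of_RS {ends : E → Sym2 V} {X : Set E} {s : V} {K : Set V}
    (hK : K ∈ componentsIn ends (RS ends X {s})) : K = RS ends X {s} := by
  obtain ⟨u, hu, rfl⟩ := hK
  apply Set.Subset.antisymm compIn_subset
  intro v hv
  exact ⟨hv, (reachIn_symm (reachIn_RS (mem_RS_iff.mp hu))).trans
    (reachIn_RS (mem_RS_iff.mp hv))⟩

lemma comps_le [Fintype V] [Fintype E] {ends : E → Sym2 V} {W R : Set V} {D : Set E}
    (hWR : ∀ x ∈ W, x ∉ R)
    (hstar : ∀ e ∈ D, ∃ u v : V, ends e = s(u, v) ∧ u ∈ R ∧ v ∉ R)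
    (htouch : ∀ K ∈ componentsIn ends W, ∃ e ∈ D, ∃ w ∈ K, w ∈ ends e) :
    (componentsIn ends W).ncard ≤ D.ncard := by
  classical
  rcases Set.eq_empty_or_nonempty (componentsIn ends W) with h | ⟨K0, hK0⟩
  · simp [h]
  obtain ⟨e0, -, -⟩ := htouch K0 hK0
  set f : Set V → E :=
    fun K => if h : ∃ e ∈ D, ∃ w ∈ K, w ∈ ends e then h.choose else e0 with hf
  have key : ∀ K ∈ componentsIn ends W, f K ∈ D ∧ ∃ w ∈ K, w ∈ ends (f K) := by
    intro K hK
    have h := htouch K hK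
    rw [hf]
    simp only [dif_pos h]
    exact ⟨h.choose_spec.1, h.choose_spec.2⟩
  apply Set.ncard_le_ncard_of_injOn f (fun K hK => (key K hK).1) ?_ (Set.toFinite D)
  intro K hK K' hK' heq
  obtain ⟨hD, w, hwK, hwe⟩ := key K hK
  obtain ⟨hD', w', hwK', hwe'⟩ := key K' hK'
  rw [heq] at hwe
  obtain ⟨u, v, hev, hu, hv⟩ := hstar (f K') hD'
  rw [hev, Sym2.mem_iff] at hwe hwe'
  have hw : w = v := by
    rcases hwe with h | h
    · exact absurd (h.symm ▸ hu) (hWR w (comps_subset hK hwK))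
    · exact h
  have hw' : w' = v := by
    rcases hwe' with h | h
    · exact absurd (h.symm ▸ hu) (hWR w' (comps_subset hK' hwK'))
    · exact h
  exact comps_eq_of_mem hK hK' (hw ▸ hwK) (hw' ▸ hwK')

lemma blockOf_succ {ends : E → Sym2 V} {s : V} {p : ℕ} {C : ℕ → Set E}
    {j : ℕ} (h1 : 1 ≤ j) (hj : j ≤ p) :
    blockOf ends s p C j = RS ends (C j) {s} \ RS ends (C (j - 1)) {s} := by
  rw [blockOf, if_neg (by omega), if_pos hj]

lemma blockOf_top {ends : E → Sym2 V} {s : V} {p : ℕ} {C : ℕ → Set E} :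
    blockOf ends s p C (p + 1) = Set.univ \ RS ends (C p) {s} := by
  rw [blockOf, if_neg (by omega), if_neg (by omega)]

lemma blockOf_zero {ends : E → Sym2 V} {s : V} {p : ℕ} {C : ℕ → Set E} :
    blockOf ends s p C 0 = RS ends (C 0) {s} := by
  rw [blockOf, if_pos rfl]

lemma Icc_succ_right' {a n : ℕ} (h : a ≤ n + 1) :
    Set.Icc a (n + 1) = Set.Icc a n ∪ {n + 1} := by
  ext x; simp only [Set.mem_Icc, Set.mem_union, Set.mem_singleton_iff]; omega

lemma unionBlocks_succ {ends : E → Sym2 V} {s : V} {p : ℕ} {C : ℕ → Set E}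
    {a n : ℕ} (h : a ≤ n + 1) :
    unionBlocks ends s p C a (n + 1)
      = unionBlocks ends s p C a n ∪ blockOf ends s p C (n + 1) := by
  rw [unionBlocks, unionBlocks, Icc_succ_right' h, Set.biUnion_union]
  simp

lemma unionBlocks_eq [Fintype E] {ends : E → Sym2 V} {s t : V} {p : ℕ} {C : ℕ → Set E}
    (hC : CanonSeq ends s t p C) {m m' : ℕ} (hmm : m ≤ m') (hm' : m' ≤ p) :
    unionBlocks ends s p C (m + 1) m' = RS ends (C m') {s} \ RS ends (C m) {s} := by
  revert hm'
  induction m', hmm using Nat.le_induction with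
  | base =>
    intro _
    rw [unionBlocks, Set.Icc_eq_empty (by omega)]
    simp
  | succ n hn ih =>
    intro hn1
    rw [unionBlocks_succ (by omega), ih (by omega), blockOf_succ (by omega) hn1]
    have h1 : RS ends (C m) {s} ⊆ RS ends (C n) {s} := Cnest' hC hn (by omega)
    have h2 : RS ends (C n) {s} ⊆ RS ends (C (n + 1)) {s} := Cnest hC (by omega) hn1
    ext x
    simp only [Set.mem_union, Set.mem_diff]
    constructor
    · rintro (⟨hx1, hx2⟩ | ⟨hx1, hx2⟩)
      · exact ⟨h2 hx1, hx2⟩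
      · exact ⟨hx1, fun hx => hx2 (h1 hx)⟩
    · rintro ⟨hx1, hx2⟩
      by_cases hx : x ∈ RS ends (C n) {s}
      · exact Or.inl ⟨hx, hx2⟩
      · exact Or.inr ⟨hx1, hx⟩

lemma unionBlocks_compl [Fintype E] {ends : E → Sym2 V} {s t : V} {p : ℕ} {C : ℕ → Set E}
    (hC : CanonSeq ends s t p C) {m : ℕ} (hm : m ≤ p) :
    unionBlocks ends s p C (m + 1) (p + 1) = (RS ends (C m) {s})ᶜ := by
  rw [unionBlocks_succ (by omega), unionBlocks_eq hC hm le_rfl, blockOf_top]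
  have h1 : RS ends (C m) {s} ⊆ RS ends (C p) {s} := Cnest' hC hm le_rfl
  ext x
  simp only [Set.mem_union, Set.mem_diff, Set.mem_compl_iff, Set.mem_univ, true_and]
  constructor
  · rintro (⟨_, hx2⟩ | hx2)
    · exact hx2
    · exact fun hx => hx2 (h1 hx)
  · intro hx
    by_cases hxp : x ∈ RS ends (C p) {s}
    · exact Or.inl ⟨hxp, hx⟩
    · exact Or.inr hxp

lemma unionBlocks_zero {ends : E → Sym2 V} {s : V} {p : ℕ} {C : ℕ → Set E} :
    unionBlocks ends s p C 0 0 = RS ends (C 0) {s} := by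
  rw [unionBlocks, Set.Icc_self]
  simp [blockOf_zero]

lemma core_count [Fintype V] [Fintype E] {ends : E → Sym2 V} {s t : V}
    {p : ℕ} {C : ℕ → Set E}
    (hconn : ∀ u v : V, Reach ends (∅ : Set E) u v)
    (hC : CanonSeq ends s t p C) {m m' : ℕ} (hmm : m < m') (hm' : m' ≤ p)
    {K : Set V}
    (hK : K ∈ componentsIn ends (RS ends (C m') {s} \ RS ends (C m) {s})) :
    1 ≤ {e | e ∈ C m ∧ ∃ v ∈ K, v ∈ ends e}.ncard ∧
      {e | e ∈ C m ∧ ∃ v ∈ K, v ∈ ends e}.ncard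
        = {e | e ∈ C m' ∧ ∃ v ∈ K, v ∈ ends e}.ncard := by
  classical
  set Rm := RS ends (C m) {s} with hRm
  set Rm' := RS ends (C m') {s} with hRm'
  set A := {e | e ∈ C m ∧ ∃ v ∈ K, v ∈ ends e} with hA
  set B := {e | e ∈ C m' ∧ ∃ v ∈ K, v ∈ ends e} with hB
  have hminm : IsMinimumCut ends (C m) {s} {t} := Cmin hC (by omega)
  have hminm' : IsMinimumCut ends (C m') {s} {t} := Cmin hC hm'
  have hKW : K ⊆ Rm' \ Rm := comps_subset hK
  obtain ⟨u0, hu0, hKeq⟩ := hK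
  have hu0K : u0 ∈ K := by rw [hKeq]; exact ⟨hu0, Relation.ReflTransGen.refl⟩
  have hcomp : ∀ x ∈ K, ∀ y ∈ Rm' \ Rm, (∃ e : E, ends e = s(x, y)) → y ∈ K := by
    intro x hx y hy he
    rw [hKeq] at hx ⊢
    exact ⟨hy, hx.2.tail ⟨hx.1, hy, he⟩⟩
  have hbd : ∀ (e : E) (x y : V), ends e = s(x, y) → x ∈ K → y ∉ K →
      (e ∈ C m ∧ y ∈ Rm) ∨ (e ∈ C m' ∧ y ∉ Rm') := by
    intro e x y hev hx hy
    have hxW := hKW hx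
    have hyW : y ∉ Rm' \ Rm := fun h => hy (hcomp x hx y h ⟨e, hev⟩)
    by_cases hyRm : y ∈ Rm
    · left
      refine ⟨?_, hyRm⟩
      by_contra he
      exact hxW.2 (RS_step hyRm he (hev.trans Sym2.eq_swap))
    · right
      have hyRm' : y ∉ Rm' := fun h => hyW ⟨h, hyRm⟩
      refine ⟨?_, hyRm'⟩
      by_contra he
      exact hyRm' (RS_step hxW.1 he hev)
  have hAmem : ∀ e ∈ A, ∃ x y : V, ends e = s(x, y) ∧ x ∈ Rm ∧ y ∈ K := by
    intro e he
    obtain ⟨heC, w, hwK, hwe⟩ := he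
    obtain ⟨x, y, hev, hx, hy⟩ := star_decomp hminm heC
    rw [hev, Sym2.mem_iff] at hwe
    rcases hwe with h | h
    · exact absurd hx (h ▸ (hKW hwK).2)
    · exact ⟨x, y, hev, hx, h ▸ hwK⟩
  have hBmem : ∀ e ∈ B, ∃ x y : V, ends e = s(x, y) ∧ x ∈ K ∧ y ∉ Rm' := by
    intro e he
    obtain ⟨heC, w, hwK, hwe⟩ := he
    obtain ⟨x, y, hev, hx, hy⟩ := star_decomp hminm' heC
    rw [hev, Sym2.mem_iff] at hwe
    rcases hwe with h | h
    · exact ⟨x, y, hev, h ▸ hwK, hy⟩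
    · exact absurd (hKW (h ▸ hwK)).1 hy
  have hdisjCC : ∀ e ∈ C m, e ∉ C m' := fun e he => C_disj hC hmm hm' he
  have hKRm : ∀ x ∈ K, x ∉ Rm := fun x hx => (hKW hx).2
  have hKRm' : ∀ x ∈ K, x ∈ Rm' := fun x hx => (hKW hx).1
  have hsK : s ∉ K := fun h => hKRm s h self_mem_RS
  have htK : t ∉ K := fun h => t_not_RS hminm'.1 (hKRm' t h)
  have hcut1 : IsCut ends ((C m \ A) ∪ B) {s} {t} := by
    apply isCut_of_boundary (S := Rm ∪ K) (Or.inl self_mem_RS)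
      (fun h => h.elim (t_not_RS hminm.1) htK)
    intro e x y hev hx hy
    rcases hx with hx | hx
    · have heC : e ∈ C m := by
        by_contra he
        exact hy (Or.inl (RS_step hx he hev))
      left
      refine ⟨heC, fun heA => ?_⟩
      obtain ⟨a, b, hab, ha, hb⟩ := hAmem e heA
      rw [hev] at hab
      rcases Sym2.eq_iff.mp hab with ⟨h1, h2⟩ | ⟨h1, h2⟩
      · exact hy (Or.inr (h2.symm ▸ hb))
      · exact hKRm x (h1.symm ▸ hb) hx
    · have hyK : y ∉ K := fun h => hy (Or.inr h)
      rcases hbd e x y hev hx hyK with ⟨h1, h2⟩ | ⟨h1, h2⟩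
      · exact absurd (Or.inl h2) hy
      · exact Or.inr ⟨h1, x, hx, by rw [hev]; exact Sym2.mem_mk_left x y⟩
  have hcut2 : IsCut ends ((C m' \ B) ∪ A) {s} {t} := by
    apply isCut_of_boundary (S := Rm' \ K) ⟨self_mem_RS, hsK⟩
      (fun h => t_not_RS hminm'.1 h.1)
    intro e x y hev hx hy
    by_cases hyK : y ∈ K
    · rcases hbd e y x (hev.trans Sym2.eq_swap) hyK hx.2 with ⟨h1, h2⟩ | ⟨h1, h2⟩
      · exact Or.inr ⟨h1, y, hyK, by rw [hev]; exact Sym2.mem_mk_right x y⟩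
      · exact absurd hx.1 h2
    · have hyRm' : y ∉ Rm' := fun h => hy ⟨h, hyK⟩
      have heC : e ∈ C m' := by
        by_contra he
        exact hyRm' (RS_step hx.1 he hev)
      refine Or.inl ⟨heC, fun heB => ?_⟩
      obtain ⟨a, b, hab, ha, hb⟩ := hBmem e heB
      rw [hev] at hab
      rcases Sym2.eq_iff.mp hab with ⟨h1, h2⟩ | ⟨h1, h2⟩
      · exact hx.2 (h1.symm ▸ ha)
      · exact hyK (h2.symm ▸ ha)
  have hAsub : A ⊆ C m := fun e he => he.1
  have hBsub : B ⊆ C m' := fun e he => he.1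
  have hc1 : ((C m \ A) ∪ B).ncard = ((C m).ncard - A.ncard) + B.ncard := by
    rw [Set.ncard_union_eq
      (Set.disjoint_left.mpr fun e he heB => hdisjCC e he.1 (hBsub heB))
      (Set.toFinite _) (Set.toFinite _), Set.ncard_diff hAsub (Set.toFinite _)]
  have hc2 : ((C m' \ B) ∪ A).ncard = ((C m').ncard - B.ncard) + A.ncard := by
    rw [Set.ncard_union_eq
      (Set.disjoint_left.mpr fun e he heA => hdisjCC e (hAsub heA) he.1)
      (Set.toFinite _) (Set.toFinite _), Set.ncard_diff hBsub (Set.toFinite _)]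
  have hAle : A.ncard ≤ (C m).ncard := Set.ncard_le_ncard hAsub (Set.toFinite _)
  have hBle : B.ncard ≤ (C m').ncard := Set.ncard_le_ncard hBsub (Set.toFinite _)
  have hlm : (C m).ncard = lamCut ends s t := lam_eq hminm
  have hlm' : (C m').ncard = lamCut ends s t := lam_eq hminm'
  have hg1 : lamCut ends s t ≤ ((C m).ncard - A.ncard) + B.ncard :=
    hc1 ▸ lam_le_cut hcut1
  have hg2 : lamCut ends s t ≤ ((C m').ncard - B.ncard) + A.ncard :=
    hc2 ▸ lam_le_cut hcut2
  have heqc : A.ncard = B.ncard := by omega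
  have hne : A.Nonempty ∨ B.Nonempty := by
    by_contra h
    push_neg at h
    have hAe : A = ∅ := h.1
    have hBe : B = ∅ := h.2
    have hreach : ∀ y : V, Reach ends (∅ : Set E) u0 y → y ∈ K := by
      intro y hy
      induction hy with
      | refl => exact hu0K
      | @tail b c h1 h2 ih =>
        obtain ⟨e, _, hev⟩ := h2
        by_contra hcK
        rcases hbd e b c hev ih hcK with ⟨h3, _⟩ | ⟨h3, _⟩
        · have : e ∈ A := ⟨h3, b, ih, by rw [hev]; exact Sym2.mem_mk_left b c⟩
          rw [hAe] at this
          exact this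
        · have : e ∈ B := ⟨h3, b, ih, by rw [hev]; exact Sym2.mem_mk_left b c⟩
          rw [hBe] at this
          exact this
    exact hsK (hreach s (hconn u0 s))
  have hApos : 1 ≤ A.ncard := by
    rcases hne with h | h
    · exact (Set.ncard_pos (Set.toFinite _)).mpr h
    · have := (Set.ncard_pos (Set.toFinite _)).mpr h
      omega
  exact ⟨hApos, heqc⟩

lemma last_touch [Fintype V] [Fintype E] {ends : E → Sym2 V} {s t : V}
    {p : ℕ} {C : ℕ → Set E}
    (hconn : ∀ u v : V, Reach ends (∅ : Set E) u v)
    (hC : CanonSeq ends s t p C) {m : ℕ} (hm : m ≤ p) {K : Set V}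
    (hK : K ∈ componentsIn ends (RS ends (C m) {s})ᶜ) :
    ∃ e ∈ C m, ∃ w ∈ K, w ∈ ends e := by
  classical
  obtain ⟨u0, hu0, hKeq⟩ := hK
  have hu0K : u0 ∈ K := by rw [hKeq]; exact ⟨hu0, Relation.ReflTransGen.refl⟩
  have hKW : K ⊆ (RS ends (C m) {s})ᶜ := by rw [hKeq]; exact compIn_subset
  have hcomp : ∀ x ∈ K, ∀ y, y ∉ RS ends (C m) {s} → (∃ e : E, ends e = s(x, y)) → y ∈ K := by
    intro x hx y hy he
    rw [hKeq] at hx ⊢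
    exact ⟨hy, hx.2.tail ⟨hx.1, hy, he⟩⟩
  by_contra h
  push_neg at h
  have hreach : ∀ y : V, Reach ends (∅ : Set E) u0 y → y ∈ K := by
    intro y hy
    induction hy with
    | refl => exact hu0K
    | @tail b c h1 h2 ih =>
      obtain ⟨e, _, hev⟩ := h2
      by_cases hcRm : c ∈ RS ends (C m) {s}
      · have heC : e ∈ C m := by
          by_contra he
          exact (hKW ih) (RS_step hcRm he (hev.trans Sym2.eq_swap))
        exact absurd (by rw [hev]; exact Sym2.mem_mk_left b c) (h e heC b ih)
      · exact hcomp b ih c hcRm ⟨e, hev⟩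
  exact (hKW (hreach s (hconn u0 s))) self_mem_RS

end Aux


/-- With `W_0, …, W_{q+1}` the bundles of a connected multigraph `G`
(encoded by the block-boundary function `st`) and `C'_0, …, C'_q` the inter-bundle
cuts: each bundle induces at most `λ = λ_G(s,t)` connected components; for `1 ≤ i ≤ q`
each component of `G[W_i]` is incident with some number `c ≥ 1` of edges of `C'_{i-1}`
and exactly `c` edges of `C'_i`; `W_0` is incident with all `λ` edges of `C'_0` and
`W_{q+1}` with all `λ` edges of `C'_q`. -/
theorem bundles_components_structure {V E : Type} [Fintype V] [Fintype E]
    (ends : E → Sym2 V) (hloop : ∀ e, ¬ (ends e).IsDiag)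
    (hconn : ∀ u v : V, Reach ends (∅ : Set E) u v)
    (s t : V) (hst : s ≠ t)
    (p : ℕ) (C : ℕ → Set E) (hC : CanonSeq ends s t p C)
    (q : ℕ) (st : ℕ → ℕ) (hW : IsBundleSeq ends s p C q st) :
    (∀ i : ℕ, i ≤ q + 1 →
      (componentsIn ends (bundleOf ends s p C st i)).ncard ≤ lamCut ends s t) ∧
    (∀ i : ℕ, 1 ≤ i → i ≤ q →
      ∀ K ∈ componentsIn ends (bundleOf ends s p C st i),
        ∃ c : ℕ, 1 ≤ c ∧
          {e | e ∈ interCut C st (i - 1) ∧ ∃ v ∈ K, v ∈ ends e}.ncard = c ∧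
          {e | e ∈ interCut C st i ∧ ∃ v ∈ K, v ∈ ends e}.ncard = c) ∧
    (∀ e ∈ interCut C st 0, ∃ v ∈ bundleOf ends s p C st 0, v ∈ ends e) ∧
    (∀ e ∈ interCut C st q, ∃ v ∈ bundleOf ends s p C st (q + 1), v ∈ ends e) := by
  classical
  obtain ⟨hst0, hst1, hstq2, hmono, -⟩ := hW
  have hstle : ∀ i, i ≤ q + 1 → st i ≤ p + 1 := by
    intro i hi
    have := hmono i (q + 2) (by omega) (le_refl _)
    omega
  have hstge : ∀ i, 1 ≤ i → i ≤ q + 1 → 1 ≤ st i := by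
    intro i hi1 hi2
    rcases eq_or_lt_of_le hi1 with h | h
    · subst h; omega
    · have := hmono 1 i h (by omega)
      omega
  have hstlt : ∀ i, i ≤ q + 1 → st i < st (i + 1) :=
    fun i hi => hmono i (i + 1) (by omega) (by omega)
  have hb0 : bundleOf ends s p C st 0 = RS ends (C 0) {s} := by
    have heq : bundleOf ends s p C st 0 = unionBlocks ends s p C (st 0) (st 1 - 1) := rfl
    rw [heq, hst0, hst1]
    exact unionBlocks_zero
  have hbmid : ∀ i, 1 ≤ i → i ≤ q → bundleOf ends s p C st i =
      RS ends (C (st (i + 1) - 1)) {s} \ RS ends (C (st i - 1)) {s} := by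
    intro i h1 h2
    have h3 : 1 ≤ st i := hstge i h1 (by omega)
    have h4 : st i < st (i + 1) := hstlt i (by omega)
    have h5 : st (i + 1) ≤ p + 1 := hstle (i + 1) (by omega)
    have heq : bundleOf ends s p C st i
        = unionBlocks ends s p C (st i) (st (i + 1) - 1) := rfl
    rw [heq]
    obtain ⟨k, hk⟩ : ∃ k, st i = k + 1 := ⟨st i - 1, by omega⟩
    rw [hk]
    exact unionBlocks_eq hC (by omega) (by omega)
  have hm4 : st (q + 1) - 1 ≤ p := by
    have := hstle (q + 1) (by omega)
    have := hstge (q + 1) (by omega) (by omega)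
    omega
  have hblastm : bundleOf ends s p C st (q + 1) =
      (RS ends (C (st (q + 1) - 1)) {s})ᶜ := by
    have heq : bundleOf ends s p C st (q + 1)
        = unionBlocks ends s p C (st (q + 1)) (st (q + 2) - 1) := rfl
    rw [heq, hstq2]
    have h3 : 1 ≤ st (q + 1) := hstge _ (by omega) (by omega)
    obtain ⟨k, hk⟩ : ∃ k, st (q + 1) = k + 1 := ⟨st (q + 1) - 1, by omega⟩
    rw [hk]
    exact unionBlocks_compl hC (by omega)
  have hic : ∀ i, 1 ≤ i → interCut C st (i - 1) = C (st i - 1) := by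
    intro i h1
    have h : i - 1 + 1 = i := by omega
    rw [interCut, h]
  have hic0 : interCut C st 0 = C 0 := by
    have heq : interCut C st 0 = C (st 1 - 1) := rfl
    rw [heq, hst1]
  have hlam1 : 1 ≤ lamCut ends s t := lam_pos hconn hst
  have part3 : ∀ e ∈ interCut C st 0, ∃ v ∈ bundleOf ends s p C st 0, v ∈ ends e := by
    rw [hic0, hb0]
    intro e he
    obtain ⟨u, v, hev, hu, -⟩ := star_decomp (Cmin hC (Nat.zero_le p)) he
    exact ⟨u, hu, by rw [hev]; exact Sym2.mem_mk_left u v⟩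
  have part4 : ∀ e ∈ interCut C st q, ∃ v ∈ bundleOf ends s p C st (q + 1), v ∈ ends e := by
    have hicq : interCut C st q = C (st (q + 1) - 1) := rfl
    rw [hicq, hblastm]
    intro e he
    obtain ⟨u, v, hev, -, hv⟩ := star_decomp (Cmin hC hm4) he
    exact ⟨v, hv, by rw [hev]; exact Sym2.mem_mk_right u v⟩
  have part2 : ∀ i, 1 ≤ i → i ≤ q →
      ∀ K ∈ componentsIn ends (bundleOf ends s p C st i),
      ∃ c, 1 ≤ c ∧ {e | e ∈ interCut C st (i - 1) ∧ ∃ v ∈ K, v ∈ ends e}.ncard = c ∧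
        {e | e ∈ interCut C st i ∧ ∃ v ∈ K, v ∈ ends e}.ncard = c := by
    intro i h1 h2 K hK
    rw [hbmid i h1 h2] at hK
    have hmm : st i - 1 < st (i + 1) - 1 := by
      have := hstlt i (by omega)
      have := hstge i h1 (by omega)
      omega
    have hm'p : st (i + 1) - 1 ≤ p := by
      have := hstle (i + 1) (by omega)
      omega
    obtain ⟨hpos, heqc⟩ := core_count hconn hC hmm hm'p hK
    refine ⟨{e | e ∈ C (st i - 1) ∧ ∃ v ∈ K, v ∈ ends e}.ncard, hpos, ?_, ?_⟩
    · rw [hic i h1]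
    · have hicq : interCut C st i = C (st (i + 1) - 1) := rfl
      rw [hicq]
      exact heqc.symm
  have part1 : ∀ i, i ≤ q + 1 →
      (componentsIn ends (bundleOf ends s p C st i)).ncard ≤ lamCut ends s t := by
    intro i hi
    rcases Nat.eq_zero_or_pos i with h0 | h1
    · subst h0
      rw [hb0]
      have hsub : componentsIn ends (RS ends (C 0) {s}) ⊆ {RS ends (C 0) {s}} :=
        fun K hK => comps_of_RS hK
      calc (componentsIn ends (RS ends (C 0) {s})).ncard
          ≤ ({RS ends (C 0) {s}} : Set (Set V)).ncard :=
            Set.ncard_le_ncard hsub (Set.toFinite _)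
        _ = 1 := Set.ncard_singleton _
        _ ≤ _ := hlam1
    rcases Nat.lt_or_ge i (q + 1) with hiq | hiq
    · have h2 : i ≤ q := by omega
      have hmm : st i - 1 < st (i + 1) - 1 := by
        have := hstlt i (by omega)
        have := hstge i h1 (by omega)
        omega
      have hm'p : st (i + 1) - 1 ≤ p := by
        have := hstle (i + 1) (by omega)
        omega
      have hm : st i - 1 ≤ p := by omega
      have hmin := Cmin hC hm
      rw [hbmid i h1 h2]
      have htouch : ∀ K ∈ componentsIn ends
          (RS ends (C (st (i + 1) - 1)) {s} \ RS ends (C (st i - 1)) {s}),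
          ∃ e ∈ C (st i - 1), ∃ w ∈ K, w ∈ ends e := by
        intro K hK
        obtain ⟨hpos, -⟩ := core_count hconn hC hmm hm'p hK
        have hne : {e | e ∈ C (st i - 1) ∧ ∃ v ∈ K, v ∈ ends e}.Nonempty :=
          (Set.ncard_pos (Set.toFinite _)).mp (by omega)
        obtain ⟨e, he, w, hw, hwe⟩ := hne
        exact ⟨e, he, w, hw, hwe⟩
      have hle := comps_le (fun x hx => hx.2) (fun e he => star_decomp hmin he) htouch
      calc _ ≤ (C (st i - 1)).ncard := hle
        _ = lamCut ends s t := lam_eq hmin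
    · have h3 : i = q + 1 := by omega
      subst h3
      rw [hblastm]
      have hmin := Cmin hC hm4
      have hle := comps_le (W := (RS ends (C (st (q + 1) - 1)) {s})ᶜ)
        (fun x hx => hx) (fun e he => star_decomp hmin he)
        (fun K hK => last_touch hconn hC hm4 hK)
      calc _ ≤ (C (st (q + 1) - 1)).ncard := hle
        _ = lamCut ends s t := lam_eq hmin
  exact ⟨part1, part2, part3, part4⟩

end FlowAug
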